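/- arXiv:2304.03202 — 5 statements merged into one kernel-verified Lean document; each statement's English description precedes it below -/
import Mathlib

section
/- Let v ∈ R^d (d ≥ 1) with sorted entries v_(1) ≥ v_(2) ≥ ... ≥ v_(d), and let 1 ≤ F < d. Suppose v_(F) > v_(F+1) (so the scalar below is well-defined and positive). If m = (Σ_{i=1}^{F+1} v_(i) − (F+1)·v_(F+1))^{-1}, then for the scaled vector m·v, the condition 1 + k·(m·v_(k)) > Σ_{i≤k} m·v_(i) holds for k = F but fails for k = F+1. -/
open Finset

/-- Lemma 3.2 (increase-sparsity case): for a vector with entries `v 1 ≥ ... ≥ v d`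
(1-based, sorted descending) and `1 ≤ F < d` with `v F > v (F+1)`, scaling by
`m = (∑_{i=1}^{F+1} v i − (F+1) v (F+1))⁻¹` makes the sparsemax support condition
`1 + k (m v_k) > ∑_{i ≤ k} m v_i` hold at `k = F` but fail at `k = F + 1`. -/
theorem stmt1 (d F : ℕ) (v : ℕ → ℝ)
    (hF : 1 ≤ F) (hFd : F + 1 ≤ d)
    (hsorted : ∀ i j, 1 ≤ i → i ≤ j → j ≤ d → v j ≤ v i)
    (hgap : v (F + 1) < v F)
    (m : ℝ)
    (hm : m = ((∑ i ∈ Finset.Icc 1 (F + 1), v i) - (F + 1 : ℝ) * v (F + 1))⁻¹) :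
    (1 + (F : ℝ) * (m * v F) > ∑ i ∈ Finset.Icc 1 F, m * v i) ∧
      ¬(1 + ((F : ℝ) + 1) * (m * v (F + 1)) > ∑ i ∈ Finset.Icc 1 (F + 1), m * v i) := by
  have hsplit : (∑ i ∈ Finset.Icc 1 (F + 1), v i)
      = (∑ i ∈ Finset.Icc 1 F, v i) + v (F + 1) :=
    Finset.sum_Icc_succ_top (by omega) v
  -- D1 = ∑_{1..F} v i − F * v F ≥ 0
  have hD1 : (F : ℝ) * v F ≤ ∑ i ∈ Finset.Icc 1 F, v i := by
    have : ∑ i ∈ Finset.Icc 1 F, v F ≤ ∑ i ∈ Finset.Icc 1 F, v i := by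
      apply Finset.sum_le_sum
      intro i hi
      simp only [Finset.mem_Icc] at hi
      exact hsorted i F hi.1 hi.2 (by omega)
    simpa [Finset.sum_const, Nat.card_Icc, mul_comm] using this
  set S := ∑ i ∈ Finset.Icc 1 F, v i with hS
  set D : ℝ := S + v (F + 1) - (F + 1 : ℝ) * v (F + 1) with hD
  have hmD : m = D⁻¹ := by rw [hm, hsplit, hD]
  have hDeq : D = (S - (F : ℝ) * v F) + (F : ℝ) * (v F - v (F + 1)) := by ring
  have hgap' : (0 : ℝ) < (F : ℝ) * (v F - v (F + 1)) := by
    apply mul_pos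
    · exact_mod_cast hF
    · linarith
  have hDpos : 0 < D := by
    rw [hDeq]; nlinarith
  constructor
  · rw [← Finset.mul_sum, ← hS]
    have h1 : m * (S - (F : ℝ) * v F) < 1 := by
      rw [hmD]
      rw [inv_mul_lt_iff₀ hDpos] -- D? D⁻¹ * x < 1 ↔ x < D
      · rw [hDeq]; nlinarith
    nlinarith
  · rw [← Finset.mul_sum, hsplit, hmD]
    have : D⁻¹ * (S + v (F + 1)) = 1 + ((F : ℝ) + 1) * (D⁻¹ * v (F + 1)) := by
      field_simp
      ring
    rw [this]
    exact lt_irrefl _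
end

section
/- Let v ∈ R^d with sorted entries v_(1) ≥ ... ≥ v_(d), F ≥ 1, and suppose v_(F) > v_(F+1) and m > 0 satisfies m > 1/(Σ_{i=1}^{F+1} v_(i) − (F+1)·v_(F+1)). Then the index k(m·v) := max{k : 1 + k·m·v_(k) > Σ_{i≤k} m·v_(i)} satisfies k(m·v) ≤ F. -/
open Finset

/-- If `v 1 ≥ ... ≥ v d` (1-based, sorted descending), `1 ≤ F`, `v F > v (F+1)` and
`m > 1 / (∑_{i=1}^{F+1} v i − (F+1) v (F+1))`, then the sparsemax support size
`k(m·v) = max {k ∈ [1,d] : 1 + k (m v_k) > ∑_{i ≤ k} m v_i}` is at most `F`. -/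
theorem stmt2 (d F : ℕ) (v : ℕ → ℝ)
    (hF : 1 ≤ F) (hFd : F + 1 ≤ d)
    (hsorted : ∀ i j, 1 ≤ i → i ≤ j → j ≤ d → v j ≤ v i)
    (hgap : v (F + 1) < v F)
    (m : ℝ) (hm0 : m > 0)
    (hm : m > 1 / ((∑ i ∈ Finset.Icc 1 (F + 1), v i) - (F + 1 : ℝ) * v (F + 1))) :
    sSup {k : ℕ | 1 ≤ k ∧ k ≤ d ∧
        1 + (k : ℝ) * (m * v k) > ∑ i ∈ Finset.Icc 1 k, m * v i} ≤ F := by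
  apply csSup_le'
  rintro k ⟨hk1, hkd, hkgt⟩
  by_contra hkF
  push_neg at hkF
  have hFk : F + 1 ≤ k := hkF
  have hvk_le : v k ≤ v (F + 1) := hsorted (F + 1) k (by omega) hFk hkd
  have hDrw : ∑ i ∈ Icc 1 (F + 1), (v i - v (F + 1))
      = (∑ i ∈ Icc 1 (F + 1), v i) - (F + 1 : ℝ) * v (F + 1) := by
    rw [Finset.sum_sub_distrib, Finset.sum_const, Nat.card_Icc]
    push_cast
    ring
  have hD : 0 < (∑ i ∈ Icc 1 (F + 1), v i) - (F + 1 : ℝ) * v (F + 1) := by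
    rw [← hDrw]
    refine Finset.sum_pos' ?_ ⟨F, ?_, ?_⟩
    · intro i hi
      simp only [mem_Icc] at hi
      have := hsorted i (F + 1) hi.1 hi.2 hFd
      linarith
    · simp only [mem_Icc]; omega
    · linarith
  have hmD : 1 < m * ((∑ i ∈ Icc 1 (F + 1), v i) - (F + 1 : ℝ) * v (F + 1)) := by
    rw [gt_iff_lt, div_lt_iff₀ hD] at hm
    linarith [hm]
  have key : ∑ i ∈ Icc 1 (F + 1), (v i - v (F + 1)) ≤ ∑ i ∈ Icc 1 k, (v i - v k) := by
    calc ∑ i ∈ Icc 1 (F + 1), (v i - v (F + 1))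
        ≤ ∑ i ∈ Icc 1 (F + 1), (v i - v k) := by
          apply Finset.sum_le_sum
          intro i hi
          linarith
      _ ≤ ∑ i ∈ Icc 1 k, (v i - v k) := by
          apply Finset.sum_le_sum_of_subset_of_nonneg
          · exact Finset.Icc_subset_Icc_right hFk
          · intro i hi _
            simp only [mem_Icc] at hi
            have := hsorted i k hi.1 hi.2 hkd
            linarith
  have hsum : ∑ i ∈ Icc 1 k, (v i - v k) = (∑ i ∈ Icc 1 k, v i) - (k : ℝ) * v k := by
    rw [Finset.sum_sub_distrib, Finset.sum_const, Nat.card_Icc]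
    simp
  have hmul : ∑ i ∈ Icc 1 k, m * v i = m * ∑ i ∈ Icc 1 k, v i := by
    rw [Finset.mul_sum]
  have h2 : m * ((∑ i ∈ Icc 1 (F + 1), v i) - (F + 1 : ℝ) * v (F + 1))
      ≤ m * ((∑ i ∈ Icc 1 k, v i) - (k : ℝ) * v k) := by
    apply mul_le_mul_of_nonneg_left _ (le_of_lt hm0)
    rw [← hsum, ← hDrw]
    exact key
  rw [hmul] at hkgt
  nlinarith [hkgt, h2, hmD]
end

section
/- The condition set in the sparsemax threshold is downward-closed: if 1 + k·v_(k) > Σ_{i≤k} v_(i) holds for some k, then 1 + j·v_(j) > Σ_{i≤j} v_(i) holds for all 1 ≤ j ≤ k, where v_(i) are the entries of v sorted in descending order. -/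
open Finset

/-- Downward closedness of the sparsemax condition set: for sorted entries
`v 1 ≥ ... ≥ v d` (1-based), if `1 + k · v k > ∑_{i ≤ k} v i` holds for some `k ≤ d`,
then `1 + j · v j > ∑_{i ≤ j} v i` holds for all `1 ≤ j ≤ k`. -/
theorem stmt4 (d : ℕ) (v : ℕ → ℝ)
    (hsorted : ∀ i j, 1 ≤ i → i ≤ j → j ≤ d → v j ≤ v i) :
    ∀ k j, 1 ≤ j → j ≤ k → k ≤ d →
      (1 + (k : ℝ) * v k > ∑ i ∈ Finset.Icc 1 k, v i) →
        1 + (j : ℝ) * v j > ∑ i ∈ Finset.Icc 1 j, v i := by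
  intro k j hj hjk
  induction k, hjk using Nat.le_induction with
  | base => intro _ h; exact h
  | succ k hk ih =>
    intro hkd hcond
    apply ih (le_trans (Nat.le_succ k) hkd)
    have hsum : ∑ i ∈ Finset.Icc 1 (k+1), v i = (∑ i ∈ Finset.Icc 1 k, v i) + v (k+1) := by
      rw [Finset.sum_Icc_succ_top (by omega : 1 ≤ k + 1)]
    have h1 : (1:ℝ) + (k : ℝ) * v (k+1) > ∑ i ∈ Finset.Icc 1 k, v i := by
      push_cast at hcond
      rw [hsum] at hcond
      nlinarith
    have h2 : v (k+1) ≤ v k := hsorted k (k+1) (by omega) (by omega) hkd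
    have hk0 : (0:ℝ) ≤ (k:ℝ) := Nat.cast_nonneg k
    nlinarith
end

section
/- For v ∈ R^d, let k = k(v) := max{j : 1 + j·v_(j) > Σ_{i≤j} v_(i)} and τ(v) := (Σ_{i≤k} v_(i) − 1)/k. Then the vector p with p_i = max(v_i − τ(v), 0) lies in the probability simplex, i.e., p_i ≥ 0 for all i and Σ_i p_i = 1. -/
open Finset

/-- For sorted entries `v 1 ≥ ... ≥ v d` (1-based), with
`k = max {j ∈ [1,d] : 1 + j · v j > ∑_{i ≤ j} v i}` and
`τ = (∑_{i ≤ k} v i − 1) / k`, the vector `p i = max (v i − τ) 0` lies in the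
probability simplex: all entries nonnegative and they sum to 1. -/
theorem stmt5 (d : ℕ) (hd : 1 ≤ d) (v : ℕ → ℝ)
    (hsorted : ∀ i j, 1 ≤ i → i ≤ j → j ≤ d → v j ≤ v i)
    (k : ℕ)
    (hk : k = sSup {j : ℕ | 1 ≤ j ∧ j ≤ d ∧
        1 + (j : ℝ) * v j > ∑ i ∈ Finset.Icc 1 j, v i})
    (τ : ℝ) (hτ : τ = ((∑ i ∈ Finset.Icc 1 k, v i) - 1) / k)
    (p : ℕ → ℝ) (hp : ∀ i, p i = max (v i - τ) 0) :
    (∀ i ∈ Finset.Icc 1 d, 0 ≤ p i) ∧ ∑ i ∈ Finset.Icc 1 d, p i = 1 := by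
  set S := {j : ℕ | 1 ≤ j ∧ j ≤ d ∧
      1 + (j : ℝ) * v j > ∑ i ∈ Finset.Icc 1 j, v i} with hS
  have hne : S.Nonempty := by
    refine ⟨1, le_refl 1, hd, ?_⟩
    simp
  have hbdd : BddAbove S := ⟨d, fun j hj => hj.2.1⟩
  have hkmem : k ∈ S := hk ▸ Nat.sSup_mem hne hbdd
  obtain ⟨hk1, hkd, hkgt⟩ := hkmem
  have kpos : (0:ℝ) < k := by exact_mod_cast hk1
  have hτk : (k:ℝ) * τ = (∑ i ∈ Finset.Icc 1 k, v i) - 1 := by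
    rw [hτ]; field_simp
  have hvk : τ < v k := by
    rw [hτ, div_lt_iff₀ kpos]
    nlinarith [hkgt]
  have hupper : ∀ j, k < j → j ≤ d → v j ≤ τ := by
    intro j hkj hjd
    have hk1d : k + 1 ≤ d := Nat.succ_le_of_lt (lt_of_lt_of_le hkj hjd)
    have hns : ¬ (1 + ((k+1:ℕ) : ℝ) * v (k+1) > ∑ i ∈ Finset.Icc 1 (k+1), v i) := by
      intro hgt
      have hle : k + 1 ≤ sSup S := le_csSup hbdd ⟨by omega, hk1d, hgt⟩
      rw [← hk] at hle
      omega
    push_neg at hns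
    rw [Finset.sum_Icc_succ_top (by omega : 1 ≤ k + 1)] at hns
    push_cast at hns
    have hvk1 : v (k+1) ≤ τ := by
      rw [hτ, le_div_iff₀ kpos]
      nlinarith [hns]
    exact le_trans (hsorted (k+1) j (by omega) hkj hjd) hvk1
  refine ⟨fun i _ => by rw [hp]; exact le_max_right _ _, ?_⟩
  have hIccd : Finset.Icc 1 d = Finset.Ioc 0 d := Finset.Icc_add_one_left_eq_Ioc 0 d
  have hIcck : Finset.Icc 1 k = Finset.Ioc 0 k := Finset.Icc_add_one_left_eq_Ioc 0 k
  have hsplit : ∑ i ∈ Finset.Ioc 0 k, p i + ∑ i ∈ Finset.Ioc k d, p i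
      = ∑ i ∈ Finset.Ioc 0 d, p i :=
    Finset.sum_Ioc_consecutive _ (Nat.zero_le k) hkd
  have h1 : ∑ i ∈ Finset.Ioc 0 k, p i = ∑ i ∈ Finset.Ioc 0 k, (v i - τ) := by
    refine Finset.sum_congr rfl fun i hi => ?_
    rw [Finset.mem_Ioc] at hi
    rw [hp, max_eq_left]
    have : τ < v i := lt_of_lt_of_le hvk (hsorted i k hi.1 hi.2 hkd)
    linarith
  have h2 : ∑ i ∈ Finset.Ioc k d, p i = 0 := by
    refine Finset.sum_eq_zero fun i hi => ?_
    rw [Finset.mem_Ioc] at hi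
    rw [hp, max_eq_right]
    have := hupper i hi.1 hi.2
    linarith
  rw [hIccd, ← hsplit, h1, h2, Finset.sum_sub_distrib, Finset.sum_const, Nat.card_Ioc, Nat.sub_zero,
    nsmul_eq_mul]
  rw [hIcck] at hτk
  linarith
end

section
/- With notation as in the previous statement, the minimum value satisfies min_R E(R) = 1 − Σ_{x∈𝒳, y∈𝒴} P_{X,Y}(x,y)²/P_X(x). Equivalently, defining the quadratic mutual information I_q(X,Y) := Σ_{x,y} P_{X,Y}(x,y)²/P_X(x) − Σ_y P_Y(y)², one has min_R E(R) = 1 − Σ_y P_Y(y)² − I_q(X,Y). -/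
open Finset

/-- Key per-row identity: the inner loss equals a constant plus a nonnegative
quadratic distance from the conditional distribution. -/
lemma stmt10_aux {Y : Type*} [Fintype Y] [DecidableEq Y] (p r : Y → ℝ)
    (hS : (∑ y, p y) ≠ 0) :
    ∑ y, p y * ((1 - r y) ^ 2 + ∑ y' ∈ Finset.univ.erase y, (r y') ^ 2)
      = (∑ y, p y) - (∑ y, (p y) ^ 2 / (∑ y', p y'))
        + (∑ y', p y') * ∑ y, (r y - p y / (∑ y', p y')) ^ 2 := by
  set S := ∑ y, p y with hSdef
  have h1 : ∀ y : Y, p y * ((1 - r y) ^ 2 + ∑ y' ∈ Finset.univ.erase y, (r y') ^ 2)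
      = p y - 2 * (p y * r y) + p y * (∑ y', (r y') ^ 2) := by
    intro y
    rw [Finset.sum_erase_eq_sub (Finset.mem_univ y)]
    ring
  rw [Finset.sum_congr rfl fun y _ => h1 y]
  have h2 : ∀ y : Y, S * (r y - p y / S) ^ 2
      = S * (r y) ^ 2 - 2 * (p y * r y) + (p y) ^ 2 / S := by
    intro y; field_simp; ring
  rw [Finset.mul_sum, Finset.sum_congr rfl fun y _ => h2 y]
  rw [Finset.sum_add_distrib, Finset.sum_sub_distrib,
      Finset.sum_add_distrib, Finset.sum_sub_distrib,
      ← Finset.mul_sum, ← Finset.mul_sum, ← Finset.sum_mul]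
  rw [← hSdef]
  ring

/-- The minimum of `E(R)` over `R` with `∑_y R x y = 1` for each `x` equals
`1 − ∑_{x,y} P(x,y)²/P_X(x)`, equivalently `1 − ∑_y P_Y(y)² − I_q(X,Y)` where
`I_q(X,Y) = ∑_{x,y} P(x,y)²/P_X(x) − ∑_y P_Y(y)²`. -/
theorem stmt10 {X Y : Type*} [Fintype X] [Fintype Y] [DecidableEq Y]
    (P : X → Y → ℝ) (hP0 : ∀ x y, 0 ≤ P x y)
    (hP1 : ∑ x, ∑ y, P x y = 1)
    (hPX : ∀ x, 0 < ∑ y, P x y) :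
    IsLeast
      {e : ℝ | ∃ R : X → Y → ℝ, (∀ x, ∑ y, R x y = 1) ∧
        e = ∑ x, ∑ y, P x y * ((1 - R x y) ^ 2 +
          ∑ y' ∈ Finset.univ.erase y, (R x y') ^ 2)}
      (1 - ∑ x, ∑ y, (P x y) ^ 2 / (∑ y', P x y')) ∧
    1 - ∑ x, ∑ y, (P x y) ^ 2 / (∑ y', P x y') =
      1 - ∑ y, (∑ x, P x y) ^ 2 -
        ((∑ x, ∑ y, (P x y) ^ 2 / (∑ y', P x y')) - ∑ y, (∑ x, P x y) ^ 2) := by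
  have hSne : ∀ x, (∑ y, P x y) ≠ 0 := fun x => (hPX x).ne'
  constructor
  · constructor
    · -- membership: take R x y = P x y / P_X x
      refine ⟨fun x y => P x y / (∑ y', P x y'), ?_, ?_⟩
      · intro x
        rw [← Finset.sum_div, div_self (hSne x)]
      · have : ∀ x, ∑ y, P x y * ((1 - P x y / (∑ y', P x y')) ^ 2 +
            ∑ y' ∈ Finset.univ.erase y, (P x y' / (∑ y'', P x y'')) ^ 2)
            = (∑ y, P x y) - (∑ y, (P x y) ^ 2 / (∑ y', P x y')) := by
          intro x
          rw [stmt10_aux (P x) (fun y => P x y / (∑ y', P x y')) (hSne x)]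
          simp
        rw [Finset.sum_congr rfl fun x _ => this x, Finset.sum_sub_distrib, hP1]
    · -- lower bound
      rintro e ⟨R, hR, rfl⟩
      have key : ∀ x, (∑ y, P x y) - (∑ y, (P x y) ^ 2 / (∑ y', P x y'))
          ≤ ∑ y, P x y * ((1 - R x y) ^ 2 +
            ∑ y' ∈ Finset.univ.erase y, (R x y') ^ 2) := by
        intro x
        rw [stmt10_aux (P x) (R x) (hSne x)]
        have h1 : 0 ≤ (∑ y', P x y') * ∑ y, (R x y - P x y / (∑ y', P x y')) ^ 2 :=
          mul_nonneg (hPX x).le (Finset.sum_nonneg fun y _ => sq_nonneg _)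
        linarith
      calc 1 - ∑ x, ∑ y, (P x y) ^ 2 / (∑ y', P x y')
          = ∑ x, ((∑ y, P x y) - (∑ y, (P x y) ^ 2 / (∑ y', P x y'))) := by
            rw [Finset.sum_sub_distrib, hP1]
        _ ≤ _ := Finset.sum_le_sum fun x _ => key x
  · ring
end
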